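/- If λ ∈ ℝⁿ satisfies σ_j(λ) ≥ 0 for all 1 ≤ j ≤ k (i.e. λ lies in the closed Gårding cone Γ̄_k), then σ_{k−1,i}(λ) ≥ 0 for every index i, where σ_{k−1,i}(λ) is the (k−1)-st elementary symmetric polynomial of λ with the i-th component deleted. -/

import Mathlib

set_option linter.unusedSectionVars false
set_option linter.unusedVariables false
set_option maxHeartbeats 1000000

open Finset Polynomial

section EsymAux

variable {ι : Type*} [DecidableEq ι]

/-- elementary symmetric polynomial of `f` over a finset `A` -/
noncomputable def Esym (A : Finset ι) (k : ℕ) (f : ι → ℝ) : ℝ :=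
  ∑ s ∈ A.powersetCard k, ∏ i ∈ s, f i

lemma Esym_zero (A : Finset ι) (f : ι → ℝ) : Esym A 0 f = 1 := by
  simp [Esym]

lemma Esym_eq_zero {A : Finset ι} {k : ℕ} (h : A.card < k) (f : ι → ℝ) : Esym A k f = 0 := by
  rw [Esym, Finset.powersetCard_eq_empty.2 h, Finset.sum_empty]

lemma Esym_self (A : Finset ι) (f : ι → ℝ) : Esym A A.card f = ∏ i ∈ A, f i := by
  rw [Esym, Finset.powersetCard_self, Finset.sum_singleton]

lemma Esym_one (A : Finset ι) (f : ι → ℝ) : Esym A 1 f = ∑ i ∈ A, f i := by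
  rw [Esym, Finset.powersetCard_one, Finset.sum_map]
  simp

lemma Esym_insert {A : Finset ι} {a : ι} (ha : a ∉ A) (k : ℕ) (f : ι → ℝ) :
    Esym (insert a A) (k + 1) f = Esym A (k + 1) f + f a * Esym A k f := by
  rw [Esym, Finset.powersetCard_succ_insert ha, Finset.sum_union, Finset.sum_image]
  · rw [Esym, Esym, Finset.mul_sum]
    congr 1
    refine Finset.sum_congr rfl fun s hs => ?_
    rw [Finset.mem_powersetCard] at hs
    rw [Finset.prod_insert (fun hc => ha (hs.1 hc))]
  · intro s hs t ht hst
    rw [Finset.mem_coe, Finset.mem_powersetCard] at hs ht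
    have hsa : a ∉ s := fun hc => ha (hs.1 hc)
    have hta : a ∉ t := fun hc => ha (ht.1 hc)
    rw [← Finset.erase_insert hsa, hst, Finset.erase_insert hta]
  · rw [Finset.disjoint_right]
    intro s hs hs'
    rw [Finset.mem_image] at hs
    obtain ⟨t, ht, rfl⟩ := hs
    rw [Finset.mem_powersetCard] at hs'
    exact ha (hs'.1 (Finset.mem_insert_self a t))

lemma Esym_erase {A : Finset ι} {i : ι} (hi : i ∈ A) (k : ℕ) (f : ι → ℝ) :
    Esym A (k + 1) f = Esym (A.erase i) (k + 1) f + f i * Esym (A.erase i) k f := by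
  conv_lhs => rw [← Finset.insert_erase hi]
  exact Esym_insert (Finset.notMem_erase i A) k f

lemma Esym_nonneg {A : Finset ι} {f : ι → ℝ} (h : ∀ x ∈ A, 0 ≤ f x) (k : ℕ) :
    0 ≤ Esym A k f := by
  refine Finset.sum_nonneg fun s hs => Finset.prod_nonneg fun x hx => ?_
  rw [Finset.mem_powersetCard] at hs
  exact h x (hs.1 hx)

lemma Esym_pos {A : Finset ι} {f : ι → ℝ} (h : ∀ x ∈ A, 0 < f x) {k : ℕ} (hk : k ≤ A.card) :
    0 < Esym A k f := by
  refine Finset.sum_pos (fun s hs => Finset.prod_pos fun x hx => ?_) ?_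
  · rw [Finset.mem_powersetCard] at hs
    exact h x (hs.1 hx)
  · exact Finset.powersetCard_nonempty.2 hk

/-- deleting a nonpositive entry from a strictly positive Gårding tuple -/
lemma Esym_erase_pos {A : Finset ι} {f : ι → ℝ} {i : ι} (hi : i ∈ A) (hfi : f i ≤ 0)
    (k : ℕ) (hpos : ∀ r, 1 ≤ r → r ≤ k → 0 < Esym A r f) :
    0 < Esym (A.erase i) k f := by
  induction k with
  | zero => rw [Esym_zero]; norm_num
  | succ m ih =>
      have hrec := Esym_erase hi m f
      have h1 : 0 < Esym A (m + 1) f := hpos (m+1) (by omega) (by omega)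
      have h2 : 0 < Esym (A.erase i) m f := ih fun r h1r h2r => hpos r h1r (by omega)
      nlinarith

/-- double counting -/
lemma sum_Esym_erase (A : Finset ι) (k : ℕ) (f : ι → ℝ) :
    ∑ i ∈ A, Esym (A.erase i) k f = ((A.card - k : ℕ) : ℝ) * Esym A k f := by
  have key : ∀ i ∈ A, (A.erase i).powersetCard k
      = (A.powersetCard k).filter (fun S => i ∉ S) := by
    intro i _
    ext S
    simp only [Finset.mem_powersetCard, Finset.mem_filter, Finset.subset_erase]
    tauto
  calc ∑ i ∈ A, Esym (A.erase i) k f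
      = ∑ i ∈ A, ∑ S ∈ (A.powersetCard k).filter (fun S => i ∉ S), ∏ x ∈ S, f x := by
        refine Finset.sum_congr rfl fun i hi => ?_
        rw [Esym, key i hi]
    _ = ∑ i ∈ A, ∑ S ∈ A.powersetCard k, if i ∉ S then ∏ x ∈ S, f x else 0 := by
        refine Finset.sum_congr rfl fun i _ => ?_
        rw [Finset.sum_filter]
    _ = ∑ S ∈ A.powersetCard k, ∑ i ∈ A, if i ∉ S then ∏ x ∈ S, f x else 0 :=
        Finset.sum_comm
    _ = ∑ S ∈ A.powersetCard k, ((A.card - k : ℕ) : ℝ) * ∏ x ∈ S, f x := by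
        refine Finset.sum_congr rfl fun S hS => ?_
        rw [Finset.mem_powersetCard] at hS
        rw [Finset.sum_ite, Finset.sum_const, Finset.sum_const_zero, add_zero,
          ← Finset.sdiff_eq_filter, Finset.card_sdiff_of_subset hS.1, hS.2, nsmul_eq_mul]
    _ = ((A.card - k : ℕ) : ℝ) * Esym A k f := by rw [Esym, Finset.mul_sum]

lemma sq_sum_eq (A : Finset ι) (y : ι → ℝ) :
    (∑ i ∈ A, y i) ^ 2 = ∑ i ∈ A, (y i) ^ 2 + 2 * Esym A 2 y := by
  induction A using Finset.induction with
  | empty =>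
      have h2 : Finset.powersetCard 2 (∅ : Finset ι) = ∅ :=
        Finset.powersetCard_eq_empty.2 (by simp)
      simp [Esym, h2]
  | insert _ _ ha =>
      rename_i a A ih
      rw [Finset.sum_insert ha, Finset.sum_insert ha, Esym_insert ha 1 y, Esym_one]
      ring_nf
      ring_nf at ih
      linarith

lemma newton_base (A : Finset ι) (f : ι → ℝ) (k : ℕ) (hk2 : 2 ≤ k) (hcard : A.card = k)
    (h0 : Esym A (k - 1) f = 0) : Esym A k f * Esym A (k - 2) f ≤ 0 := by
  set y : ι → ℝ := fun i => ∏ x ∈ A.erase i, f x with hy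
  -- sum of y equals Esym A (k-1) f
  have hsumy : ∑ i ∈ A, y i = Esym A (k - 1) f := by
    have h := sum_Esym_erase A (k - 1) f
    have hone : A.card - (k - 1) = 1 := by omega
    rw [hone, Nat.cast_one, one_mul] at h
    rw [← h]
    refine Finset.sum_congr rfl fun i hi => ?_
    have : (A.erase i).card = k - 1 := by
      rw [Finset.card_erase_of_mem hi, hcard]
    rw [← this, Esym_self]
  -- product identity
  have hprod : Esym A k f * Esym A (k - 2) f = Esym A 2 y := by
    have hEk : Esym A k f = ∏ i ∈ A, f i := by rw [← hcard, Esym_self]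
    -- complement bijection: Esym A (k-2) f = ∑ over pairs P of ∏_{A\P} f
    have hcompl : Esym A (k - 2) f = ∑ P ∈ A.powersetCard 2, ∏ x ∈ A \ P, f x := by
      rw [Esym]
      refine Finset.sum_nbij' (fun T => A \ T) (fun P => A \ P) ?_ ?_ ?_ ?_ ?_
      · intro T hT
        rw [Finset.mem_powersetCard] at hT ⊢
        refine ⟨Finset.sdiff_subset, ?_⟩
        rw [Finset.card_sdiff_of_subset hT.1, hT.2, hcard]
        omega
      · intro P hP
        rw [Finset.mem_powersetCard] at hP ⊢
        refine ⟨Finset.sdiff_subset, ?_⟩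
        rw [Finset.card_sdiff_of_subset hP.1, hP.2, hcard]
      · intro T hT
        rw [Finset.mem_powersetCard] at hT
        exact Finset.sdiff_sdiff_eq_self hT.1
      · intro P hP
        rw [Finset.mem_powersetCard] at hP
        exact Finset.sdiff_sdiff_eq_self hP.1
      · intro T hT
        rw [Finset.mem_powersetCard] at hT
        rw [Finset.sdiff_sdiff_eq_self hT.1]
    have hpair : ∀ P ∈ A.powersetCard 2, ∏ x ∈ P, y x = (∏ i ∈ A, f i) * ∏ x ∈ A \ P, f x := by
      intro P hP
      rw [Finset.mem_powersetCard] at hP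
      obtain ⟨i, j, hij, rfl⟩ := Finset.card_eq_two.1 hP.2
      have hiA : i ∈ A := hP.1 (by simp)
      have hjA : j ∈ A := hP.1 (by simp)
      rw [Finset.prod_pair hij]
      have key : ∀ a b : ι, a ≠ b → a ∈ A → b ∈ A →
          (∏ x ∈ A.erase a, f x) = f b * ∏ x ∈ A \ {a, b}, f x := by
        intro a b hab haA hbA
        have hsub : A \ {a, b} ⊆ A.erase a := by
          intro x hx
          simp only [Finset.mem_sdiff, Finset.mem_insert, Finset.mem_singleton, not_or] at hx
          exact Finset.mem_erase.2 ⟨hx.2.1, hx.1⟩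
        have hdiff : A.erase a \ (A \ {a, b}) = {b} := by
          ext x
          simp only [Finset.mem_sdiff, Finset.mem_erase, Finset.mem_insert,
            Finset.mem_singleton]
          push_neg
          constructor
          · rintro ⟨⟨hxa, hxA⟩, h2⟩
            rcases h2 hxA with h | h
            · exact absurd h hxa
            · exact h
          · rintro rfl
            exact ⟨⟨hab.symm, hbA⟩, fun _ => Or.inr rfl⟩

        calc ∏ x ∈ A.erase a, f x
            = (∏ x ∈ A.erase a \ (A \ {a, b}), f x) * ∏ x ∈ (A \ {a, b}), f x :=
              (Finset.prod_sdiff hsub).symm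
          _ = f b * ∏ x ∈ A \ {a, b}, f x := by rw [hdiff, Finset.prod_singleton]
      have hyi : y i = f j * ∏ x ∈ A \ {i, j}, f x := key i j hij hiA hjA
      have hyj : y j = f i * ∏ x ∈ A \ {i, j}, f x := by
        have h := key j i hij.symm hjA hiA
        rw [Finset.pair_comm j i] at h
        exact h
      have hA : ∏ x ∈ A, f x = (∏ x ∈ A \ {i, j}, f x) * (f i * f j) := by
        rw [← Finset.prod_sdiff hP.1, Finset.prod_pair hij]
      rw [hyi, hyj, hA]
      ring
    rw [hEk, hcompl, Esym, Finset.mul_sum]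
    rw [Finset.sum_congr rfl hpair]
  have hsq := sq_sum_eq A y
  rw [hsumy, h0] at hsq
  have : Esym A 2 y = -(∑ i ∈ A, (y i) ^ 2) / 2 := by linarith
  rw [hprod, this]
  have : 0 ≤ ∑ i ∈ A, (y i) ^ 2 := Finset.sum_nonneg fun i _ => sq_nonneg _
  linarith

lemma Esym_eq_esymm (A : Finset ι) (k : ℕ) (f : ι → ℝ) :
    Esym A k f = (A.val.map f).esymm k := by
  rw [Finset.esymm_map_val]; rfl

lemma multiset_esymm_eq (M : Multiset ℝ) (j : ℕ) :
    M.esymm j = Esym (Finset.univ : Finset (Fin M.toList.length)) j M.toList.get := by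
  have h1 : (Finset.univ : Finset (Fin M.toList.length)).val.map M.toList.get = M := by
    rw [Fin.univ_val_map]
    change ((List.ofFn M.toList.get : List ℝ) : Multiset ℝ) = M
    rw [List.ofFn_get]
    exact M.coe_toList
  rw [Esym_eq_esymm, h1]

/-- Newton's inequality instance: if the middle elementary symmetric function vanishes,
the product of its neighbors is nonpositive. -/
lemma newton_multiset : ∀ (m : ℕ) (M : Multiset ℝ), Multiset.card M = m →
    ∀ k : ℕ, 2 ≤ k → k ≤ m → M.esymm (k-1) = 0 → M.esymm k * M.esymm (k-2) ≤ 0 := by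
  intro m
  induction m with
  | zero => intro M hM k hk2 hkm; omega
  | succ m ih =>
    intro M hM k hk2 hkm h0
    rcases eq_or_lt_of_le hkm with heq | hlt
    · -- base case : card M = k
      have hlen : M.toList.length = k := by rw [Multiset.length_toList, hM, heq]
      have hcard : (Finset.univ : Finset (Fin M.toList.length)).card = k := by
        rw [Finset.card_univ, Fintype.card_fin, hlen]
      rw [multiset_esymm_eq M k, multiset_esymm_eq M (k-2)]
      refine newton_base _ _ k hk2 hcard ?_
      rw [← multiset_esymm_eq M (k-1)]
      exact h0
    · -- descent via polynomial derivative
      have hkm' : k ≤ m := by omega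
      set P := (M.map fun a => Polynomial.X - Polynomial.C a).prod with hP
      have hProots : P.roots = M := roots_multiset_prod_X_sub_C M
      have hPdeg : P.natDegree = m + 1 := by
        rw [hP, natDegree_multiset_prod_X_sub_C_eq_card, hM]
      have hPmonic : P.Monic :=
        monic_multiset_prod_of_monic _ _ fun a _ => monic_X_sub_C a
      set Q := Polynomial.derivative P with hQ
      have hcard_le : m + 1 ≤ Multiset.card Q.roots + 1 := by
        have := Polynomial.card_roots_le_derivative P
        rwa [hProots, hM] at this
      have hQne : Q ≠ 0 := by
        intro hc
        rw [hc, Polynomial.roots_zero] at hcard_le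
        simp at hcard_le
        omega
      have hQdeg_le : Q.natDegree ≤ m := by
        have := Polynomial.natDegree_derivative_le P
        rwa [hPdeg, Nat.add_sub_cancel] at this
      have hQroots_card : Multiset.card Q.roots = m := by
        have h1 : Multiset.card Q.roots ≤ Q.natDegree := Polynomial.card_roots' Q
        omega
      have hQdeg : Q.natDegree = m := le_antisymm hQdeg_le (by
        have h1 : Multiset.card Q.roots ≤ Q.natDegree := Polynomial.card_roots' Q
        omega)
      -- coefficients of P
      have hcoeffP : ∀ j, j ≤ m + 1 → P.coeff (m + 1 - j) = (-1)^j * M.esymm j := by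
        intro j hj
        have h := Multiset.prod_X_sub_C_coeff M (k := m + 1 - j) (by rw [hM]; omega)
        rw [hM] at h
        rw [← hP] at h
        rw [h, show m + 1 - (m + 1 - j) = j by omega]
      -- leading coefficient of Q
      have hQlead : Q.leadingCoeff = (m + 1 : ℝ) := by
        have hc : P.coeff (m + 1) = 1 := by
          have h := hPmonic.coeff_natDegree
          rwa [hPdeg] at h
        rw [Polynomial.leadingCoeff, hQdeg, hQ, Polynomial.coeff_derivative, hc]
        push_cast; ring
      -- esymm relation between Q.roots and M
      have hrel : ∀ j, j ≤ m → (m + 1 : ℝ) * (Q.roots).esymm j = ((m + 1 - j : ℕ) : ℝ) * M.esymm j := by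
        intro j hj
        have h1 : Q.coeff (m - j) = Q.leadingCoeff * (-1)^(Q.natDegree - (m - j)) *
            (Q.roots).esymm (Q.natDegree - (m - j)) :=
          Polynomial.coeff_eq_esymm_roots_of_card (by rw [hQroots_card, hQdeg])
            (by rw [hQdeg]; omega)
        rw [hQdeg, show m - (m - j) = j by omega, hQlead] at h1
        have h2 : Q.coeff (m - j) = P.coeff (m - j + 1) * ((m - j : ℕ) + 1 : ℝ) := by
          rw [hQ, Polynomial.coeff_derivative]
        rw [show m - j + 1 = m + 1 - j by omega, hcoeffP j (by omega)] at h2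
        have h3 : ((m - j : ℕ) + 1 : ℝ) = ((m + 1 - j : ℕ) : ℝ) := by
          push_cast [Nat.cast_sub (by omega : j ≤ m), Nat.cast_sub (by omega : j ≤ m + 1)]
          ring
        rw [h3] at h2
        have hpow : ((-1 : ℝ))^j ≠ 0 := pow_ne_zero j (by norm_num)
        have key := h1.symm.trans h2
        apply mul_left_cancel₀ hpow
        linear_combination key
      -- apply induction hypothesis to the roots of Q
      have h0' : (Q.roots).esymm (k-1) = 0 := by
        have h := hrel (k-1) (by omega)
        rw [h0, mul_zero] at h
        have hm1 : (m + 1 : ℝ) ≠ 0 := by positivity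
        rcases mul_eq_zero.mp h with hc | hc
        · exact absurd hc hm1
        · exact hc
      have hQle := ih Q.roots hQroots_card k hk2 hkm' h0'
      have hk' := hrel k (by omega)
      have hk2' := hrel (k-2) (by omega)
      have c1pos : (0:ℝ) < ((m + 1 - k : ℕ) : ℝ) := by
        have : 1 ≤ m + 1 - k := by omega
        exact_mod_cast Nat.lt_of_lt_of_le Nat.zero_lt_one this
      have c2pos : (0:ℝ) < ((m + 1 - (k-2) : ℕ) : ℝ) := by
        have : 1 ≤ m + 1 - (k - 2) := by omega
        exact_mod_cast Nat.lt_of_lt_of_le Nat.zero_lt_one this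
      have h4 : ((m + 1 : ℝ)) * Q.roots.esymm k * (((m + 1 : ℝ)) * Q.roots.esymm (k-2))
          = (((m + 1 - k : ℕ):ℝ) * M.esymm k) * (((m + 1 - (k-2) : ℕ):ℝ) * M.esymm (k-2)) := by
        rw [hk', hk2']
      have h5 : (((m + 1 - k : ℕ):ℝ) * ((m + 1 - (k-2) : ℕ):ℝ)) * (M.esymm k * M.esymm (k-2))
          = ((m + 1 : ℝ))^2 * (Q.roots.esymm k * Q.roots.esymm (k-2)) := by
        linear_combination -h4
      have h6 : ((m + 1 : ℝ))^2 * (Q.roots.esymm k * Q.roots.esymm (k-2)) ≤ 0 := by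
        nlinarith [mul_nonneg (sq_nonneg ((m + 1 : ℝ))) (neg_nonneg.2 hQle)]
      by_contra hcon
      push_neg at hcon
      have hpos := mul_pos (mul_pos c1pos c2pos) hcon
      linarith

/-- Nonvanishing of the deleted symmetric polynomial on the open cone. -/
lemma Esym_erase_ne_zero {A : Finset ι} {f : ι → ℝ} {k : ℕ} (hk1 : 1 ≤ k) (hk : k ≤ A.card)
    (hpos : ∀ r, 1 ≤ r → r ≤ k → 0 < Esym A r f) {i : ι} (hi : i ∈ A) :
    Esym (A.erase i) (k - 1) f ≠ 0 := by
  rcases eq_or_lt_of_le hk1 with h1 | hk2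
  · rw [← h1, Esym_zero]; norm_num
  intro hzero
  by_cases hfi : f i ≤ 0
  · exact absurd hzero
      (ne_of_gt (Esym_erase_pos hi hfi (k-1) (fun r h1r h2r => hpos r h1r (by omega))))
  push_neg at hfi
  have hrec1 : Esym A k f = Esym (A.erase i) k f + f i * Esym (A.erase i) (k-1) f := by
    have h := Esym_erase hi (k-1) f
    rwa [show k - 1 + 1 = k by omega] at h
  have hrec2 : Esym A (k-1) f = Esym (A.erase i) (k-1) f + f i * Esym (A.erase i) (k-2) f := by
    have h := Esym_erase hi (k-2) f
    rwa [show k - 2 + 1 = k - 1 by omega] at h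
  have hEk : Esym (A.erase i) k f = Esym A k f := by rw [hrec1, hzero]; ring
  rcases eq_or_lt_of_le hk with hkc | hkc
  · have hz : Esym (A.erase i) k f = 0 :=
      Esym_eq_zero (by rw [Finset.card_erase_of_mem hi]; omega) f
    have := hpos k hk1 le_rfl
    rw [← hEk] at this
    linarith
  · have hk2' : 0 < Esym (A.erase i) (k-2) f := by
      have h1 := hpos (k-1) (by omega) (by omega)
      rw [hrec2, hzero, zero_add] at h1
      nlinarith
    have hkpos : 0 < Esym (A.erase i) k f := by
      rw [hEk]; exact hpos k hk1 le_rfl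
    have hNW := newton_multiset ((A.erase i).card) ((A.erase i).val.map f)
      (by rw [Multiset.card_map]; rfl) k hk2
      (by rw [Finset.card_erase_of_mem hi]; omega)
      (by rw [← Esym_eq_esymm]; exact hzero)
    rw [← Esym_eq_esymm, ← Esym_eq_esymm] at hNW
    nlinarith

/-- the combinatorial identity behind the derivative of a shifted symmetric polynomial -/
lemma sum_sum_erase (A : Finset ι) (r : ℕ) (g : ι → ℝ) :
    ∑ S ∈ A.powersetCard (r+1), ∑ x ∈ S, ∏ y ∈ S.erase x, g y
      = ∑ i ∈ A, Esym (A.erase i) r g := by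
  have lhs_eq : ∑ S ∈ A.powersetCard (r+1), ∑ x ∈ S, ∏ y ∈ S.erase x, g y
      = ∑ p ∈ (A.powersetCard (r+1)).sigma (fun S => S), ∏ y ∈ p.1.erase p.2, g y :=
    (Finset.sum_sigma (A.powersetCard (r+1)) (fun S => S)
      (fun p => ∏ y ∈ p.1.erase p.2, g y)).symm
  have rhs_eq : ∑ i ∈ A, Esym (A.erase i) r g
      = ∑ q ∈ A.sigma (fun i => (A.erase i).powersetCard r), ∏ y ∈ q.2, g y := by
    exact (Finset.sum_sigma A (fun i => (A.erase i).powersetCard r)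
      (fun q => ∏ y ∈ q.2, g y)).symm
  rw [lhs_eq, rhs_eq]
  refine Finset.sum_nbij' (fun p => ⟨p.2, p.1.erase p.2⟩) (fun q => ⟨insert q.1 q.2, q.1⟩)
    ?_ ?_ ?_ ?_ ?_
  · rintro ⟨S, x⟩ hp
    rw [Finset.mem_sigma] at hp
    obtain ⟨hS, hx⟩ := hp
    rw [Finset.mem_powersetCard] at hS
    rw [Finset.mem_sigma, Finset.mem_powersetCard]
    refine ⟨hS.1 hx, ?_, ?_⟩
    · intro y hy
      rw [Finset.mem_erase] at hy ⊢
      exact ⟨hy.1, hS.1 hy.2⟩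
    · rw [Finset.card_erase_of_mem hx, hS.2]
      omega
  · rintro ⟨x, T⟩ hq
    rw [Finset.mem_sigma] at hq
    obtain ⟨hx, hT⟩ := hq
    rw [Finset.mem_powersetCard, Finset.subset_erase] at hT
    rw [Finset.mem_sigma, Finset.mem_powersetCard]
    refine ⟨⟨Finset.insert_subset hx hT.1.1, ?_⟩, Finset.mem_insert_self _ _⟩
    rw [Finset.card_insert_of_notMem hT.1.2, hT.2]
  · rintro ⟨S, x⟩ hp
    rw [Finset.mem_sigma] at hp
    have hx : x ∈ S := hp.2
    simp only [Finset.insert_erase hx]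
  · rintro ⟨x, T⟩ hq
    rw [Finset.mem_sigma] at hq
    have hT := hq.2
    rw [Finset.mem_powersetCard, Finset.subset_erase] at hT
    simp only [Finset.erase_insert hT.1.2]
  · rintro ⟨S, x⟩ _
    rfl

lemma Esym_shift_hasDerivAt (A : Finset ι) (f : ι → ℝ) (r : ℕ) (t : ℝ) :
    HasDerivAt (fun u => Esym A (r+1) (fun x => f x + u))
      (∑ i ∈ A, Esym (A.erase i) r (fun x => f x + t)) t := by
  have h1 : ∀ S ∈ A.powersetCard (r+1), HasDerivAt (fun u => ∏ x ∈ S, (f x + u))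
      (∑ x ∈ S, ∏ y ∈ S.erase x, (f y + t)) t := by
    intro S _
    have h := HasDerivAt.fun_finsetProd (𝕜 := ℝ) (u := S) (f := fun x u => f x + u)
      (f' := fun _ => 1) (x := t) (fun i _ => by simpa using (hasDerivAt_id t).const_add (f i))
    simpa using h
  have h2 := HasDerivAt.fun_sum h1
  have h3 := sum_sum_erase A r (fun y => f y + t)
  rw [h3] at h2
  exact h2

/-- positivity of shifted symmetric functions: the closed cone moves into the open cone -/
lemma Esym_shift_pos (A : Finset ι) (f : ι → ℝ) (k : ℕ) (hk : k ≤ A.card)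
    (h : ∀ r, 1 ≤ r → r ≤ k → 0 ≤ Esym A r f) :
    ∀ r, r ≤ k → ∀ t : ℝ, 0 < t → 0 < Esym A r (fun x => f x + t) := by
  intro r
  induction r with
  | zero => intro _ t _; rw [Esym_zero]; norm_num
  | succ s ihs =>
    intro hsk t ht
    have ihpos : ∀ u : ℝ, 0 < u → 0 < Esym A s (fun x => f x + u) := fun u hu =>
      ihs (by omega) u hu
    have hcont : Continuous (fun u => Esym A (s+1) (fun x => f x + u)) := by
      rw [continuous_iff_continuousAt]
      intro u
      exact (Esym_shift_hasDerivAt A f s u).differentiableAt.continuousAt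
    have hmono : StrictMonoOn (fun u => Esym A (s+1) (fun x => f x + u)) (Set.Ici 0) := by
      refine strictMonoOn_of_deriv_pos (convex_Ici 0) hcont.continuousOn ?_
      intro u hu
      rw [interior_Ici, Set.mem_Ioi] at hu
      rw [(Esym_shift_hasDerivAt A f s u).deriv, sum_Esym_erase A s (fun x => f x + u)]
      have hc : 1 ≤ A.card - s := by omega
      have hcpos : (0:ℝ) < ((A.card - s : ℕ) : ℝ) := by exact_mod_cast Nat.lt_of_lt_of_le Nat.zero_lt_one hc
      exact mul_pos hcpos (ihpos u hu)
    have h0le : 0 ≤ Esym A (s+1) f := h (s+1) (by omega) hsk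
    have hlt := hmono Set.self_mem_Ici (Set.mem_Ici.2 ht.le) ht
    simp only at hlt
    have h00 : Esym A (s+1) (fun x => f x + 0) = Esym A (s+1) f := by simp
    rw [h00] at hlt
    linarith

end EsymAux

/-- `esymm n k f` : the `k`-th elementary symmetric polynomial of `f 0, …, f (n-1)`. -/
noncomputable def esymm (n k : ℕ) (f : Fin n → ℝ) : ℝ :=
  ∑ s ∈ Finset.univ.powersetCard k, ∏ i ∈ s, f i

/-- `esymmDel n k i f` : the `k`-th elementary symmetric polynomial of the components of `f`
with the `i`-th one deleted. -/
noncomputable def esymmDel (n k : ℕ) (i : Fin n) (f : Fin n → ℝ) : ℝ :=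
  ∑ s ∈ (Finset.univ.erase i).powersetCard k, ∏ j ∈ s, f j

/-- If `λ` lies in the closed Gårding cone `Γ̄_k`, then all the deleted
`(k-1)`-st elementary symmetric polynomials are nonnegative. -/
theorem garding_cone_del_nonneg (n k : ℕ) (hk : 1 ≤ k) (hkn : k ≤ n) (lam : Fin n → ℝ)
    (hG : ∀ j : ℕ, 1 ≤ j → j ≤ k → 0 ≤ esymm n j lam) (i : Fin n) :
    0 ≤ esymmDel n (k - 1) i lam := by
  rcases eq_or_lt_of_le hk with h1 | hk2
  · rw [← h1]
    show (0:ℝ) ≤ esymmDel n 0 i lam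
    have : esymmDel n 0 i lam = Esym ((Finset.univ : Finset (Fin n)).erase i) 0 lam := rfl
    rw [this, Esym_zero]
    norm_num
  by_contra hneg
  push_neg at hneg
  set A : Finset (Fin n) := Finset.univ with hA
  have hneg' : Esym (A.erase i) (k-1) lam < 0 := hneg
  have hcardA : A.card = n := by simp [hA]
  have hcardE : (A.erase i).card = n - 1 := by
    rw [Finset.card_erase_of_mem (Finset.mem_univ i), hcardA]
  set h : ℝ → ℝ := fun t => Esym (A.erase i) (k-1) (fun x => lam x + t) with hh
  set T : ℝ := 1 + ∑ x : Fin n, |lam x| with hT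
  have hTpos : 0 < T := by
    have : 0 ≤ ∑ x : Fin n, |lam x| := Finset.sum_nonneg fun x _ => abs_nonneg _
    rw [hT]; linarith
  have hentry : ∀ x, x ∈ A.erase i → 0 < lam x + T := by
    intro x _
    have h1 : |lam x| ≤ ∑ y : Fin n, |lam y| :=
      Finset.single_le_sum (f := fun y : Fin n => |lam y|) (fun y _ => abs_nonneg _)
        (Finset.mem_univ x)
    have h2 := neg_abs_le (lam x)
    rw [hT]; linarith
  have hhT : 0 < h T := Esym_pos hentry (by rw [hcardE]; omega)
  have hk1 : k - 1 = (k - 2) + 1 := by omega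
  have hcont : Continuous h := by
    have hc : Continuous (fun t => Esym (A.erase i) ((k-2)+1) (fun x => lam x + t)) := by
      rw [continuous_iff_continuousAt]
      intro u
      exact (Esym_shift_hasDerivAt (A.erase i) lam (k-2) u).differentiableAt.continuousAt
    rw [hh, hk1]
    exact hc
  have hh0 : h 0 < 0 := by
    have : h 0 = Esym (A.erase i) (k-1) lam := by
      rw [hh]; simp
    rw [this]; exact hneg'
  have h0mem : (0:ℝ) ∈ Set.Icc (h 0) (h T) := ⟨hh0.le, hhT.le⟩
  obtain ⟨t₁, ht₁mem, ht₁⟩ := intermediate_value_Icc hTpos.le hcont.continuousOn h0mem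
  have ht₁pos : 0 < t₁ := by
    rcases eq_or_lt_of_le ht₁mem.1 with hc | hc
    · exfalso; rw [← hc] at ht₁; linarith [hh0, ht₁.ge]
    · exact hc
  have hshift : ∀ r, r ≤ k → ∀ t : ℝ, 0 < t → 0 < Esym A r (fun x => lam x + t) :=
    Esym_shift_pos A lam k (by rw [hcardA]; exact hkn) (fun r h1r h2r => hG r h1r h2r)
  exact Esym_erase_ne_zero hk (by rw [hcardA]; exact hkn)
    (fun r h1r h2r => hshift r h2r t₁ ht₁pos) (Finset.mem_univ i) ht₁
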